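/- Let d ≥ 1 and let H be a Hermitian d×d complex matrix that is path-connected, i.e., the simple graph on {1,…,d} in which i and j are adjacent exactly when i ≠ j and H_{ij} ≠ 0 is connected. Regard the d×d complex matrices as a Lie algebra over ℝ with the commutator bracket. Then the real Lie subalgebra generated by the set {i·D : D a diagonal matrix with real entries} together with i·H equals the unitary Lie algebra u(d), i.e., the set of all skew-Hermitian d×d complex matrices X (those with conjugate transpose equal to −X). -/

import Mathlib

open Matrix Complex

attribute [local instance] LieRing.ofAssociativeRing

namespace Stmt3Aux

variable {d : ℕ}

noncomputable def E (j k : Fin d) : Matrix (Fin d) (Fin d) ℂ := Matrix.single j k 1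

lemma E_apply (j k a b : Fin d) : E j k a b = if j = a ∧ k = b then 1 else 0 := by
  simp [E, Matrix.single]

noncomputable def iE (j : Fin d) : Matrix (Fin d) (Fin d) ℂ := Complex.I • E j j

noncomputable def X (j k : Fin d) : Matrix (Fin d) (Fin d) ℂ := E j k - E k j

noncomputable def Y (j k : Fin d) : Matrix (Fin d) (Fin d) ℂ := Complex.I • (E j k + E k j)

lemma E_mul_E (j k m l : Fin d) : E j k * E m l = if k = m then E j l else 0 := by
  by_cases h : k = m
  · subst h; simpa [E] using Matrix.single_mul_single_same j k l (1:ℂ) 1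
  · simp [E, h, Matrix.single_mul_single_of_ne]

lemma lie_smul' (c : ℂ) (A B : Matrix (Fin d) (Fin d) ℂ) : ⁅A, c • B⁆ = c • ⁅A, B⁆ := by
  simp [Ring.lie_def, Matrix.mul_smul, Matrix.smul_mul, smul_sub]

lemma E_mul_apply (j : Fin d) (M : Matrix (Fin d) (Fin d) ℂ) (a b : Fin d) :
    (E j j * M) a b = if j = a then M j b else 0 := by
  rw [Matrix.mul_apply, Finset.sum_eq_single j]
  · simp [E_apply]
  · intro x _ hx; simp [E_apply, Ne.symm hx]
  · simp

lemma mul_E_apply (j : Fin d) (M : Matrix (Fin d) (Fin d) ℂ) (a b : Fin d) :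
    (M * E j j) a b = if j = b then M a j else 0 := by
  rw [Matrix.mul_apply, Finset.sum_eq_single j]
  · simp [E_apply]
  · intro x _ hx; simp [E_apply, Ne.symm hx]
  · simp

lemma lie_iE_apply (j : Fin d) (M : Matrix (Fin d) (Fin d) ℂ) (a b : Fin d) :
    ⁅iE j, M⁆ a b = Complex.I * ((if j = a then M j b else 0) - (if j = b then M a j else 0)) := by
  simp only [iE, Ring.lie_def, Matrix.smul_mul, Matrix.mul_smul, Matrix.sub_apply,
    Matrix.smul_apply, E_mul_apply, mul_E_apply, smul_eq_mul]
  ring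

lemma quad (j k : Fin d) (hjk : j ≠ k) (M : Matrix (Fin d) (Fin d) ℂ) :
    ⁅iE k, ⁅iE k, ⁅iE j, ⁅iE j, M⁆⁆⁆⁆ = M j k • E j k + M k j • E k j := by
  ext a b
  simp only [lie_iE_apply, Matrix.add_apply, Matrix.smul_apply, E_apply, smul_eq_mul]
  by_cases haj : j = a <;> by_cases hak : k = a <;> by_cases hbj : j = b <;> by_cases hbk : k = b <;>
    simp_all <;> ring_nf <;> simp [Complex.I_sq] <;> ring

lemma lie_iE_X (j k : Fin d) (hjk : j ≠ k) : ⁅iE j, X j k⁆ = Y j k := by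
  simp only [iE, X, Y, Ring.lie_def, Matrix.smul_mul, Matrix.mul_smul, mul_sub, sub_mul,
    E_mul_E, if_pos rfl, if_neg hjk, if_neg (Ne.symm hjk), sub_zero, zero_sub, smul_neg,
    sub_neg_eq_add, smul_add, ite_true, if_true, smul_zero]

lemma lie_iE_Ejk (j k : Fin d) (hjk : j ≠ k) : ⁅iE j, E j k⁆ = Complex.I • E j k := by
  simp only [iE, Ring.lie_def, Matrix.smul_mul, Matrix.mul_smul, E_mul_E, if_pos rfl,
    if_neg (Ne.symm hjk), smul_zero, sub_zero, ite_true, if_true]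

lemma lie_iE_Ekj (j k : Fin d) (hjk : j ≠ k) : ⁅iE j, E k j⁆ = -(Complex.I • E k j) := by
  simp only [iE, Ring.lie_def, Matrix.smul_mul, Matrix.mul_smul, E_mul_E, if_pos rfl,
    if_neg hjk, smul_zero, zero_sub, ite_true, if_true]

lemma lie_XX (j k l : Fin d) (hjk : j ≠ k) (hkl : k ≠ l) (hjl : j ≠ l) :
    ⁅X j k, X k l⁆ = X j l := by
  simp only [X, Ring.lie_def, sub_mul, mul_sub, E_mul_E, if_pos rfl, if_neg hkl, if_neg hjk,
    if_neg (Ne.symm hjk), if_neg (Ne.symm hkl), if_neg hjl, if_neg (Ne.symm hjl)]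
  abel

lemma X_comb (j k : Fin d) (hjk : j ≠ k) (c : ℂ) :
    (Complex.normSq c : ℝ) • X j k
      = (-c.im) • ((Complex.I * c) • E j k + (Complex.I * (starRingEnd ℂ c)) • E k j)
      + (-c.re) • ((-c) • E j k + (starRingEnd ℂ c) • E k j) := by
  ext a b
  simp only [X, Matrix.smul_apply, Matrix.add_apply, Matrix.sub_apply, E_apply, smul_eq_mul,
    Complex.real_smul]
  by_cases haj : j = a <;> by_cases hak : k = a <;> by_cases hbj : j = b <;> by_cases hbk : k = b
  all_goals simp_all [Complex.ext_iff, Complex.normSq_apply]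
  all_goals try exact ⟨by ring, by ring⟩
  all_goals ring

lemma Y_comb (j k : Fin d) (hjk : j ≠ k) (c : ℂ) :
    (Complex.normSq c : ℝ) • Y j k
      = (c.re) • ((Complex.I * c) • E j k + (Complex.I * (starRingEnd ℂ c)) • E k j)
      + (-c.im) • ((-c) • E j k + (starRingEnd ℂ c) • E k j) := by
  ext a b
  simp only [Y, Matrix.smul_apply, Matrix.add_apply, Matrix.sub_apply, E_apply, smul_eq_mul,
    Complex.real_smul]
  by_cases haj : j = a <;> by_cases hak : k = a <;> by_cases hbj : j = b <;> by_cases hbk : k = b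
  all_goals simp_all [Complex.ext_iff, Complex.normSq_apply]
  all_goals try exact ⟨by ring, by ring⟩
  all_goals ring

lemma T_comb (j k : Fin d) (hjk : j ≠ k) (c : ℂ) :
    c • E j k + (-(starRingEnd ℂ c)) • E k j = (c.re : ℝ) • X j k + (c.im : ℝ) • Y j k := by
  ext a b
  simp only [X, Y, Matrix.smul_apply, Matrix.add_apply, Matrix.sub_apply, E_apply, smul_eq_mul,
    Complex.real_smul]
  by_cases haj : j = a <;> by_cases hak : k = a <;> by_cases hbj : j = b <;> by_cases hbk : k = b
  all_goals simp_all [Complex.ext_iff]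
  all_goals try exact ⟨by ring, by ring⟩
  all_goals ring

lemma iE_eq_diag (j : Fin d) :
    Complex.I • Matrix.diagonal (fun k => (((if k = j then (1:ℝ) else 0) : ℝ) : ℂ)) = iE j := by
  unfold iE
  congr 1
  ext a b
  simp only [Matrix.diagonal_apply, E_apply]
  by_cases hab : a = b <;> by_cases haj : a = j <;> simp_all [eq_comm]

end Stmt3Aux

open Stmt3Aux in
theorem stmt_3 (d : ℕ) (hd : 1 ≤ d) (H : Matrix (Fin d) (Fin d) ℂ)
    (hH : H.IsHermitian)
    (hconn : (SimpleGraph.fromRel (fun i j : Fin d => H i j ≠ 0)).Connected) :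
    (LieSubalgebra.lieSpan ℝ (Matrix (Fin d) (Fin d) ℂ)
        ({M : Matrix (Fin d) (Fin d) ℂ |
            ∃ D : Fin d → ℝ, M = Complex.I • Matrix.diagonal (fun k => (D k : ℂ))} ∪
          {Complex.I • H}) : Set (Matrix (Fin d) (Fin d) ℂ)) =
      {X : Matrix (Fin d) (Fin d) ℂ | X.conjTranspose = -X} := by
  set gens : Set (Matrix (Fin d) (Fin d) ℂ) :=
    ({M : Matrix (Fin d) (Fin d) ℂ |
        ∃ D : Fin d → ℝ, M = Complex.I • Matrix.diagonal (fun k => (D k : ℂ))} ∪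
      {Complex.I • H}) with hgens
  set L := LieSubalgebra.lieSpan ℝ (Matrix (Fin d) (Fin d) ℂ) gens with hL
  -- hermitian fact
  have hHsym : ∀ a b : Fin d, H b a = starRingEnd ℂ (H a b) := by
    intro a b
    have := congrFun (congrFun hH.eq b) a
    simpa [Matrix.conjTranspose_apply] using this.symm
  -- basic memberships
  have hiE : ∀ j : Fin d, iE j ∈ L := by
    intro j
    apply LieSubalgebra.subset_lieSpan
    left
    exact ⟨fun k => if k = j then 1 else 0, (iE_eq_diag j).symm⟩
  have hIH : Complex.I • H ∈ L := by
    apply LieSubalgebra.subset_lieSpan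
    right
    rfl
  have hpair : ∀ j k : Fin d, j ≠ k →
      (Complex.I * H j k) • E j k + (Complex.I * H k j) • E k j ∈ L := by
    intro j k hjk
    have h := quad j k hjk (Complex.I • H)
    have h2 : (Complex.I • H) j k = Complex.I * H j k := by simp
    have h3 : (Complex.I • H) k j = Complex.I * H k j := by simp
    rw [h2, h3] at h
    rw [← h]
    exact L.lie_mem (hiE k) (L.lie_mem (hiE k) (L.lie_mem (hiE j) (L.lie_mem (hiE j) hIH)))
  -- edges give X and Y
  have hedge : ∀ j k : Fin d, j ≠ k → H j k ≠ 0 → X j k ∈ L := by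
    intro j k hjk hc
    set c := H j k with hcdef
    have hv : (Complex.I * c) • E j k + (Complex.I * (starRingEnd ℂ c)) • E k j ∈ L := by
      have := hpair j k hjk
      rwa [hHsym j k] at this
    have hw : ((-c) • E j k + (starRingEnd ℂ c) • E k j : Matrix (Fin d) (Fin d) ℂ) ∈ L := by
      have hwval : ⁅iE j, (Complex.I * c) • E j k + (Complex.I * (starRingEnd ℂ c)) • E k j⁆
          = (-c) • E j k + (starRingEnd ℂ c) • E k j := by
        rw [lie_add, lie_smul', lie_smul', lie_iE_Ejk j k hjk, lie_iE_Ekj j k hjk,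
          smul_neg, smul_smul, smul_smul]
        have h1 : Complex.I * c * Complex.I = -c := by
          rw [mul_comm Complex.I c, mul_assoc, Complex.I_mul_I, mul_neg_one]
        have h2 : Complex.I * starRingEnd ℂ c * Complex.I = -(starRingEnd ℂ c) := by
          rw [mul_comm Complex.I (starRingEnd ℂ c), mul_assoc, Complex.I_mul_I, mul_neg_one]
        rw [h1, h2]
        module
      rw [← hwval]
      exact L.lie_mem (hiE j) hv
    have hns : Complex.normSq c ≠ 0 := by
      simpa [Complex.normSq_eq_zero] using hc
    have hX : ((Complex.normSq c : ℝ)) • X j k ∈ L := by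
      rw [X_comb j k hjk c]
      exact L.add_mem (L.smul_mem _ hv) (L.smul_mem _ hw)
    have := L.smul_mem ((Complex.normSq c)⁻¹ : ℝ) hX
    rwa [inv_smul_smul₀ hns] at this
  -- connectivity: X j k ∈ L for all j ≠ k
  set G := SimpleGraph.fromRel (fun i j : Fin d => H i j ≠ 0) with hG
  have hadj : ∀ {u v : Fin d}, G.Adj u v → X u v ∈ L := by
    intro u v huv
    rw [hG, SimpleGraph.fromRel_adj] at huv
    obtain ⟨hne, hor⟩ := huv
    have hc : H u v ≠ 0 := by
      rcases hor with h | h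
      · exact h
      · intro h0
        apply h
        rw [hHsym u v, h0, map_zero]
    exact hedge u v hne hc
  have hXmem : ∀ j k : Fin d, j ≠ k → X j k ∈ L := by
    have key : ∀ (j k : Fin d) (w : G.Walk j k), j ≠ k → X j k ∈ L := by
      intro j k w
      induction w with
      | nil => intro h; exact absurd rfl h
      | @cons u v k h p ih =>
        intro hjk
        by_cases hvk : v = k
        · subst hvk; exact hadj h
        · have h1 : X u v ∈ L := hadj h
          have h2 : X v k ∈ L := ih hvk
          have h3 := lie_XX u v k h.ne hvk hjk
          rw [← h3]
          exact L.lie_mem h1 h2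
    intro j k hjk
    obtain ⟨w⟩ := hconn.preconnected j k
    exact key j k w hjk
  have hYmem : ∀ j k : Fin d, j ≠ k → Y j k ∈ L := by
    intro j k hjk
    rw [← lie_iE_X j k hjk]
    exact L.lie_mem (hiE j) (hXmem j k hjk)
  -- now prove set equality
  apply subset_antisymm
  · -- forward inclusion
    have hU : ∀ x ∈ gens, x.conjTranspose = -x := by
      intro x hx
      rcases hx with ⟨D, rfl⟩ | hx
      · rw [Matrix.conjTranspose_smul, Matrix.diagonal_conjTranspose]
        simp [Pi.star_def, Complex.conj_ofReal, Complex.star_def]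
      · rw [Set.mem_singleton_iff] at hx
        subst hx
        rw [Matrix.conjTranspose_smul, hH.eq]
        simp [Complex.star_def]
    let U : LieSubalgebra ℝ (Matrix (Fin d) (Fin d) ℂ) :=
      { carrier := {X : Matrix (Fin d) (Fin d) ℂ | X.conjTranspose = -X}
        add_mem' := by
          intro a b ha hb
          simp only [Set.mem_setOf_eq] at *
          rw [Matrix.conjTranspose_add, ha, hb, neg_add]
        zero_mem' := by simp
        smul_mem' := by
          intro r x hx
          simp only [Set.mem_setOf_eq] at *
          rw [Matrix.conjTranspose_smul, hx, star_trivial, smul_neg]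
        lie_mem' := by
          intro x y hx hy
          simp only [Set.mem_setOf_eq] at *
          rw [Ring.lie_def, Matrix.conjTranspose_sub, Matrix.conjTranspose_mul,
            Matrix.conjTranspose_mul, hx, hy]
          simp only [Matrix.neg_mul, Matrix.mul_neg, neg_neg, neg_sub]
          try abel }
    have : L ≤ U := LieSubalgebra.lieSpan_le.mpr hU
    intro x hx
    exact this hx
  · -- reverse inclusion
    intro M hM
    simp only [Set.mem_setOf_eq] at hM
    have hskew : ∀ a b : Fin d, starRingEnd ℂ (M a b) = -(M b a) := by
      intro a b
      have := congrFun (congrFun hM b) a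
      simpa [Matrix.conjTranspose_apply] using this
    have hdiagmem : (Complex.I • Matrix.diagonal (fun j : Fin d => (((M j j).im : ℝ) : ℂ))) ∈ L := by
      apply LieSubalgebra.subset_lieSpan
      left
      exact ⟨fun j => (M j j).im, rfl⟩
    have hT : ∀ j k : Fin d, j ≠ k → M j k • E j k + M k j • E k j ∈ L := by
      intro j k hjk
      have hkj : M k j = -(starRingEnd ℂ (M j k)) := by
        rw [hskew j k]; ring
      rw [hkj, T_comb j k hjk (M j k)]
      exact L.add_mem (L.smul_mem _ (hXmem j k hjk)) (L.smul_mem _ (hYmem j k hjk))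
    -- decomposition of M
    have hdecomp : M = (Complex.I • Matrix.diagonal (fun j : Fin d => (((M j j).im : ℝ) : ℂ)))
        + (2⁻¹ : ℝ) • ∑ p ∈ Finset.univ.offDiag,
            (M p.1 p.2 • E p.1 p.2 + M p.2 p.1 • E p.2 p.1) := by
      ext a b
      have hsum : (∑ p ∈ Finset.univ.offDiag,
          (M p.1 p.2 • E p.1 p.2 + M p.2 p.1 • E p.2 p.1)) a b
          = (if a ≠ b then M a b else 0) + (if a ≠ b then M a b else 0) := by
        rw [Matrix.sum_apply]
        have : ∀ p ∈ (Finset.univ : Finset (Fin d)).offDiag,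
            (M p.1 p.2 • E p.1 p.2 + M p.2 p.1 • E p.2 p.1) a b
            = (if p = (a, b) then M a b else 0) + (if p = (b, a) then M a b else 0) := by
          intro p hp
          obtain ⟨p1, p2⟩ := p
          simp only [Matrix.add_apply, Matrix.smul_apply, E_apply, smul_eq_mul, Prod.mk.injEq,
            mul_ite, mul_one, mul_zero]
          have e1 : (if p1 = a ∧ p2 = b then M p1 p2 else 0)
              = (if p1 = a ∧ p2 = b then M a b else 0) := by
            by_cases h : p1 = a ∧ p2 = b
            · rw [if_pos h, if_pos h, h.1, h.2]
            · rw [if_neg h, if_neg h]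
          have e2 : (if p2 = a ∧ p1 = b then M p2 p1 else 0)
              = (if p1 = b ∧ p2 = a then M a b else 0) := by
            by_cases h : p1 = b ∧ p2 = a
            · rw [if_pos ⟨h.2, h.1⟩, if_pos h, h.2, h.1]
            · rw [if_neg fun hc => h ⟨hc.2, hc.1⟩, if_neg h]
          rw [e1, e2]
        rw [Finset.sum_congr rfl this, Finset.sum_add_distrib,
          Finset.sum_ite_eq' _ ((a, b) : Fin d × Fin d) (fun _ => M a b),
          Finset.sum_ite_eq' _ ((b, a) : Fin d × Fin d) (fun _ => M a b)]
        by_cases hab : a = b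
        · subst hab; simp
        · simp [Finset.mem_offDiag, hab, Ne.symm hab]
      simp only [Matrix.add_apply, Matrix.smul_apply]
      rw [hsum]
      by_cases hab : a = b
      · subst hab
        simp only [ne_eq, not_true_eq_false, if_false, add_zero, smul_zero]
        have hre : (M a a).re = 0 := by
          have := hskew a a
          have h2 := congrArg Complex.re this
          simp at h2
          linarith
        apply Complex.ext <;> simp [hre]
      · simp only [ne_eq, hab, not_false_iff, if_true, Matrix.diagonal_apply_ne _ hab,
          smul_zero, zero_add, Complex.real_smul]
        apply Complex.ext <;> simp [Complex.mul_re, Complex.mul_im] <;> ring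
    rw [hdecomp]
    apply L.add_mem hdiagmem
    apply L.smul_mem
    apply sum_mem
    intro p hp
    rw [Finset.mem_offDiag] at hp
    exact hT p.1 p.2 hp.2.2
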